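/- The family of maps H_s(z,w) = (z/(1 - s·w²)^{1/2}, w/(1 - s·w²)^{1/2}), for s ∈ ℝ, all agree with the identity map up to order 2 at the origin: every partial derivative of H_s of order ≤ 2 at (0,0) equals the corresponding derivative of the identity; yet H_s ≠ H_{s'} as germs whenever s ≠ s'. -/

import Mathlib

/-- `H_s(z,w) = (z (1 - s w²)^{-1/2}, w (1 - s w²)^{-1/2})`, principal branch. -/
noncomputable def H (s : ℝ) (p : ℂ × ℂ) : ℂ × ℂ :=
  (p.1 / (1 - (s : ℂ) * p.2 ^ 2) ^ ((1 : ℂ) / 2),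
   p.2 / (1 - (s : ℂ) * p.2 ^ 2) ^ ((1 : ℂ) / 2))

/-- The second iterated derivative at `0` of an odd map vanishes. -/
lemma odd_iteratedFDeriv_two (f : ℂ × ℂ → ℂ × ℂ) (hf : ∀ p, f (-p) = -f p) :
    iteratedFDeriv ℂ 2 f 0 = 0 := by
  set e : (ℂ × ℂ) ≃L[ℂ] (ℂ × ℂ) := ContinuousLinearEquiv.neg ℂ with he
  have key := e.iteratedFDerivWithin_comp_right f uniqueDiffOn_univ
      (Set.mem_univ (e (0 : ℂ × ℂ))) 2
  rw [Set.preimage_univ] at key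
  simp only [iteratedFDerivWithin_univ] at key
  have he0 : e (0 : ℂ × ℂ) = 0 := by simp [he]
  rw [he0] at key
  have hcomp : f ∘ e = -f := by
    funext p
    simp only [Function.comp_apply, Pi.neg_apply, he, ContinuousLinearEquiv.neg_apply]
    exact hf p
  rw [hcomp, iteratedFDeriv_neg_apply] at key
  refine ContinuousMultilinearMap.ext fun m => ?_
  have happ := congrArg (fun T => T m) key
  simp only [ContinuousMultilinearMap.neg_apply,
    ContinuousMultilinearMap.compContinuousLinearMap_apply,
    ContinuousLinearEquiv.coe_coe] at happ
  have hsub : (fun i : Fin 2 => e (m i)) = fun i : Fin 2 => (-1 : ℂ) • m i := by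
    funext i; simp [he]
  rw [hsub, (iteratedFDeriv ℂ 2 f 0).map_smul_univ (fun _ : Fin 2 => (-1 : ℂ)) m] at happ
  simp only [Fin.prod_univ_two, neg_mul, one_mul, neg_neg, one_smul] at happ
  have h2 : (2 : ℂ) • (iteratedFDeriv ℂ 2 f 0) m = 0 := by
    have h3 := neg_add_cancel ((iteratedFDeriv ℂ 2 f 0) m)
    rw [happ] at h3
    rw [two_smul]
    exact h3
  simpa using (smul_eq_zero.mp h2).resolve_left (by norm_num)

lemma H_odd (s : ℝ) (p : ℂ × ℂ) : H s (-p) = -H s p := by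
  simp [H, Prod.ext_iff, neg_div, neg_sq]

lemma H_eq_smul (s : ℝ) :
    H s = fun p : ℂ × ℂ => ((1 - (s : ℂ) * p.2 ^ 2) ^ ((1 : ℂ) / 2))⁻¹ • p := by
  funext p
  simp [H, Prod.ext_iff, div_eq_mul_inv, mul_comm, Prod.smul_def, smul_eq_mul]

lemma H_hasFDerivAt (s : ℝ) :
    HasFDerivAt (H s) (ContinuousLinearMap.id ℂ (ℂ × ℂ)) 0 := by
  set c : ℂ × ℂ → ℂ := fun p => ((1 - (s : ℂ) * p.2 ^ 2) ^ ((1 : ℂ) / 2))⁻¹ with hc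
  have d1 : DifferentiableAt ℂ (fun p : ℂ × ℂ => 1 - (s : ℂ) * p.2 ^ 2) 0 :=
    (differentiableAt_const _).sub ((differentiableAt_snd.pow 2).const_mul _)
  have d2 : DifferentiableAt ℂ
      (fun p : ℂ × ℂ => (1 - (s : ℂ) * p.2 ^ 2) ^ ((1 : ℂ) / 2)) 0 := by
    apply d1.cpow (differentiableAt_const _)
    simp [Complex.one_mem_slitPlane]
  have d3 : DifferentiableAt ℂ c 0 := by
    apply d2.inv
    simp [Complex.one_cpow]
  have hcd : HasFDerivAt c (fderiv ℂ c 0) 0 := d3.hasFDerivAt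
  have hid : HasFDerivAt (fun p : ℂ × ℂ => p) (ContinuousLinearMap.id ℂ (ℂ × ℂ)) 0 :=
    hasFDerivAt_id 0
  have hs := hcd.smul hid
  have hc0 : c 0 = 1 := by simp [hc, Complex.one_cpow]
  rw [H_eq_smul s]
  have heq : c 0 • ContinuousLinearMap.id ℂ (ℂ × ℂ) + (fderiv ℂ c 0).smulRight 0
      = ContinuousLinearMap.id ℂ (ℂ × ℂ) := by
    refine ContinuousLinearMap.ext fun v => ?_
    simp [hc0]
  rw [← heq]
  exact hs

theorem stmt_5 :
    (∀ s : ℝ, ∀ n : ℕ, n ≤ 2 →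
      iteratedFDeriv ℂ n (H s) 0 = iteratedFDeriv ℂ n (id : ℂ × ℂ → ℂ × ℂ) 0) ∧
    (∀ s s' : ℝ, s ≠ s' → ¬ (H s =ᶠ[nhds (0 : ℂ × ℂ)] H s')) := by
  constructor
  · intro s n hn
    interval_cases n
    · refine ContinuousMultilinearMap.ext fun m => ?_
      rw [iteratedFDeriv_zero_apply, iteratedFDeriv_zero_apply]
      simp [H, Prod.ext_iff]
    · refine ContinuousMultilinearMap.ext fun m => ?_
      rw [iteratedFDeriv_one_apply, iteratedFDeriv_one_apply,
        (H_hasFDerivAt s).fderiv, fderiv_id]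
    · rw [odd_iteratedFDeriv_two (H s) (H_odd s),
        odd_iteratedFDeriv_two id (fun p => rfl)]
  · intro s s' hss hEq
    have hcont : Continuous (fun t : ℝ => (((0 : ℂ), (t : ℂ)) : ℂ × ℂ)) := by
      continuity
    have htend : Filter.Tendsto (fun t : ℝ => (((0 : ℂ), (t : ℂ)) : ℂ × ℂ))
        (nhds 0) (nhds (0 : ℂ × ℂ)) := by
      have h := hcont.tendsto 0
      rw [Complex.ofReal_zero] at h
      exact h
    have h1 : ∀ᶠ t : ℝ in nhds 0, H s ((0 : ℂ), (t : ℂ)) = H s' ((0 : ℂ), (t : ℂ)) :=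
      htend.eventually hEq
    have h2 : ∀ᶠ t : ℝ in nhds 0, (max |s| |s'|) * t ^ 2 < 1 := by
      have hcm : Continuous (fun t : ℝ => (max |s| |s'|) * t ^ 2) := by continuity
      have htd : Filter.Tendsto (fun t : ℝ => (max |s| |s'|) * t ^ 2)
          (nhds 0) (nhds 0) := by simpa using hcm.tendsto 0
      exact htd.eventually (gt_mem_nhds one_pos)
    have h3 : ∀ᶠ t : ℝ in nhdsWithin 0 {0}ᶜ,
        H s ((0 : ℂ), (t : ℂ)) = H s' ((0 : ℂ), (t : ℂ)) ∧
        (max |s| |s'|) * t ^ 2 < 1 ∧ t ≠ 0 := by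
      filter_upwards [nhdsWithin_le_nhds (h1.and h2), self_mem_nhdsWithin] with t h ht
      exact ⟨h.1, h.2, ht⟩
    obtain ⟨t, heq, hlt, ht0⟩ := h3.exists
    -- basic facts about the bases
    have hA : (1 : ℝ) - s * t ^ 2 > 0 := by
      have : s * t ^ 2 ≤ |s| * t ^ 2 :=
        mul_le_mul_of_nonneg_right (le_abs_self s) (sq_nonneg t)
      have h' : |s| * t ^ 2 ≤ max |s| |s'| * t ^ 2 :=
        mul_le_mul_of_nonneg_right (le_max_left _ _) (sq_nonneg t)
      linarith
    have hB : (1 : ℝ) - s' * t ^ 2 > 0 := by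
      have : s' * t ^ 2 ≤ |s'| * t ^ 2 :=
        mul_le_mul_of_nonneg_right (le_abs_self s') (sq_nonneg t)
      have h' : |s'| * t ^ 2 ≤ max |s| |s'| * t ^ 2 :=
        mul_le_mul_of_nonneg_right (le_max_right _ _) (sq_nonneg t)
      linarith
    have hAc : (1 : ℂ) - (s : ℂ) * (t : ℂ) ^ 2 ≠ 0 := by
      have : ((1 - s * t ^ 2 : ℝ) : ℂ) ≠ 0 := by
        exact_mod_cast ne_of_gt hA
      push_cast at this
      simpa using this
    have hBc : (1 : ℂ) - (s' : ℂ) * (t : ℂ) ^ 2 ≠ 0 := by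
      have : ((1 - s' * t ^ 2 : ℝ) : ℂ) ≠ 0 := by
        exact_mod_cast ne_of_gt hB
      push_cast at this
      simpa using this
    have hApow : ((1 : ℂ) - (s : ℂ) * (t : ℂ) ^ 2) ^ ((1 : ℂ) / 2) ≠ 0 := by
      simp [Complex.cpow_eq_zero_iff, hAc]
    have hBpow : ((1 : ℂ) - (s' : ℂ) * (t : ℂ) ^ 2) ^ ((1 : ℂ) / 2) ≠ 0 := by
      simp [Complex.cpow_eq_zero_iff, hBc]
    have htc : (t : ℂ) ≠ 0 := by exact_mod_cast ht0
    -- compare second components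
    have hsnd : (t : ℂ) / ((1 : ℂ) - (s : ℂ) * (t : ℂ) ^ 2) ^ ((1 : ℂ) / 2)
        = (t : ℂ) / ((1 : ℂ) - (s' : ℂ) * (t : ℂ) ^ 2) ^ ((1 : ℂ) / 2) := by
      have := congrArg Prod.snd heq
      simpa [H] using this
    have hpow_eq : ((1 : ℂ) - (s : ℂ) * (t : ℂ) ^ 2) ^ ((1 : ℂ) / 2)
        = ((1 : ℂ) - (s' : ℂ) * (t : ℂ) ^ 2) ^ ((1 : ℂ) / 2) := by
      rw [div_eq_div_iff hApow hBpow] at hsnd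
      exact (mul_left_cancel₀ htc hsnd).symm
    have hbase : (1 : ℂ) - (s : ℂ) * (t : ℂ) ^ 2 = (1 : ℂ) - (s' : ℂ) * (t : ℂ) ^ 2 := by
      have hA2 : ((1 : ℂ) - (s : ℂ) * (t : ℂ) ^ 2) ^ ((1 : ℂ) / 2)
          * ((1 : ℂ) - (s : ℂ) * (t : ℂ) ^ 2) ^ ((1 : ℂ) / 2)
          = (1 : ℂ) - (s : ℂ) * (t : ℂ) ^ 2 := by
        rw [← Complex.cpow_add _ _ hAc]
        norm_num
      have hB2 : ((1 : ℂ) - (s' : ℂ) * (t : ℂ) ^ 2) ^ ((1 : ℂ) / 2)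
          * ((1 : ℂ) - (s' : ℂ) * (t : ℂ) ^ 2) ^ ((1 : ℂ) / 2)
          = (1 : ℂ) - (s' : ℂ) * (t : ℂ) ^ 2 := by
        rw [← Complex.cpow_add _ _ hBc]
        norm_num
      rw [← hA2, ← hB2, hpow_eq]
    have : (s : ℂ) = (s' : ℂ) := by
      have h' : (s : ℂ) * (t : ℂ) ^ 2 = (s' : ℂ) * (t : ℂ) ^ 2 := by
        linear_combination -hbase
      exact mul_right_cancel₀ (pow_ne_zero 2 htc) h'
    exact hss (by exact_mod_cast this)
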